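/- Let G = (V,E) be a finite d-regular graph (d ≥ 2) with adjacency matrix A and non-backtracking matrix B. Then a complex number λ with |λ| ≠ 1 is an eigenvalue of B if and only if there exists an eigenvalue μ of A such that λ² − μλ + (d−1) = 0. -/

import Mathlib

set_option linter.unusedSectionVars false

/-- A graph given by a countable (here finite) set of oriented edges: each edge `e` has an
origin `src e`, a destination `tgt e`, and the edge set carries a fixed-point-free
involution `e ↦ inv e` with `tgt (inv e) = src e`. -/
structure OrientedGraph (V E : Type*) where
  src : E → V
  tgt : E → V
  inv : E → E
  inv_inv : ∀ e, inv (inv e) = e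
  inv_ne : ∀ e, inv e ≠ e
  tgt_inv : ∀ e, tgt (inv e) = src e

variable {V E : Type*} [Fintype V] [Fintype E] [DecidableEq V] [DecidableEq E]

/-- The adjacency matrix: `A v u` is the number of oriented edges from `u` to `v`. -/
noncomputable def adjMatrix (G : OrientedGraph V E) : Matrix V V ℂ :=
  Matrix.of fun v u =>
    ((Finset.univ.filter fun e : E => G.src e = u ∧ G.tgt e = v).card : ℂ)

/-- The non-backtracking matrix `B`, acting by `(Bφ)(f) = ∑_{e : e₊ = f₋, e ≠ f⁻¹} φ(e)`. -/
noncomputable def nbMatrix (G : OrientedGraph V E) : Matrix E E ℂ :=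
  Matrix.of fun f e => if G.tgt e = G.src f ∧ e ≠ G.inv f then 1 else 0

/-- `G` is `d`-regular: every vertex has degree `d`. -/
def RegularGraph (G : OrientedGraph V E) (d : ℕ) : Prop :=
  ∀ v : V, (Finset.univ.filter fun e : E => G.src e = v).card = d

lemma src_inv (G : OrientedGraph V E) (e : E) : G.src (G.inv e) = G.tgt e := by
  have := G.tgt_inv (G.inv e); rw [G.inv_inv] at this; exact this.symm

lemma sum_tgt_eq {M : Type*} [AddCommMonoid M] (G : OrientedGraph V E) (F : E → M) (v : V) :
    ∑ e ∈ Finset.univ.filter (fun e => G.tgt e = v), F e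
    = ∑ e ∈ Finset.univ.filter (fun e => G.src e = v), F (G.inv e) := by
  apply Finset.sum_nbij' (i := G.inv) (j := G.inv) <;>
    simp [G.inv_inv, G.tgt_inv, src_inv]

lemma card_tgt (G : OrientedGraph V E) (d : ℕ) (hreg : RegularGraph G d) (v : V) :
    (Finset.univ.filter fun e : E => G.tgt e = v).card = d := by
  rw [← hreg v]
  simpa using sum_tgt_eq (M := ℕ) G (fun _ => 1) v

lemma nb_mulVec (G : OrientedGraph V E) (φ : E → ℂ) (f : E) :
    (nbMatrix G).mulVec φ f
    = (∑ e ∈ Finset.univ.filter (fun e => G.tgt e = G.src f), φ e) - φ (G.inv f) := by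
  have h1 : (nbMatrix G).mulVec φ f
      = ∑ e ∈ Finset.univ.filter (fun e => G.tgt e = G.src f ∧ e ≠ G.inv f), φ e := by
    simp [Matrix.mulVec, nbMatrix, dotProduct, ite_mul, Finset.sum_ite,
      Finset.filter_filter]
  have h2 : Finset.univ.filter (fun e => G.tgt e = G.src f ∧ e ≠ G.inv f)
      = (Finset.univ.filter (fun e => G.tgt e = G.src f)).erase (G.inv f) := by
    ext e; simp [Finset.mem_erase, and_comm]
  have h3 : G.inv f ∈ Finset.univ.filter (fun e => G.tgt e = G.src f) := by
    simp [G.tgt_inv]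
  rw [h1, h2, eq_sub_iff_add_eq, add_comm, Finset.add_sum_erase _ _ h3]

lemma adj_mulVec (G : OrientedGraph V E) (ψ : V → ℂ) (v : V) :
    (adjMatrix G).mulVec ψ v
    = ∑ e ∈ Finset.univ.filter (fun e => G.tgt e = v), ψ (G.src e) := by
  rw [← Finset.sum_fiberwise (g := G.src) (f := fun e => ψ (G.src e))]
  simp only [Matrix.mulVec, adjMatrix, dotProduct, Matrix.of_apply]
  refine Finset.sum_congr rfl fun u _ => ?_
  rw [Finset.filter_filter]
  have : ∀ e ∈ Finset.univ.filter (fun e : E => G.tgt e = v ∧ G.src e = u),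
      ψ (G.src e) = ψ u := by intro e he; simp at he; rw [he.2]
  rw [Finset.sum_congr rfl this, Finset.sum_const, nsmul_eq_mul]
  have heq : (Finset.univ.filter fun e : E => G.src e = u ∧ G.tgt e = v)
      = Finset.univ.filter (fun e => G.tgt e = v ∧ G.src e = u) := by
    ext e; simp [and_comm]
  rw [heq]

theorem stmt0 (G : OrientedGraph V E) (d : ℕ) (hd : 2 ≤ d) (hreg : RegularGraph G d)
    (lam : ℂ) (hlam : ‖lam‖ ≠ 1) :
    (∃ φ : E → ℂ, φ ≠ 0 ∧ (nbMatrix G).mulVec φ = lam • φ) ↔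
      ∃ μ : ℂ, (∃ ψ : V → ℂ, ψ ≠ 0 ∧ (adjMatrix G).mulVec ψ = μ • ψ) ∧
        lam ^ 2 - μ * lam + ((d : ℂ) - 1) = 0 := by
  have hd1 : ((d : ℂ) - 1) ≠ 0 := by
    rw [sub_ne_zero]
    exact_mod_cast (by omega : d ≠ 1)
  have hlam2 : lam ^ 2 ≠ 1 := by
    intro h
    apply hlam
    have habs : ‖lam‖ ^ 2 = 1 := by
      rw [← norm_pow, h, norm_one]
    have h1 : (‖lam‖ - 1) * (‖lam‖ + 1) = 0 := by nlinarith
    rcases mul_eq_zero.mp h1 with h2 | h2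
    · linarith
    · have := norm_nonneg lam; linarith
  constructor
  · rintro ⟨φ, hφ0, hφ⟩
    set S : V → ℂ := fun v => ∑ e ∈ Finset.univ.filter (fun e => G.tgt e = v), φ e with hSdef
    set T : V → ℂ := fun v => ∑ e ∈ Finset.univ.filter (fun e => G.src e = v), φ e with hTdef
    have key : ∀ f, S (G.src f) - φ (G.inv f) = lam * φ f := by
      intro f
      have h := congrFun hφ f
      rw [nb_mulVec] at h
      simpa using h
    have key2 : ∀ f, (lam ^ 2 - 1) * φ f = lam * S (G.src f) - S (G.tgt f) := by
      intro f
      have h1 := key f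
      have h2 := key (G.inv f)
      rw [G.inv_inv, src_inv] at h2
      linear_combination (-lam) * h1 + h2
    have key3 : ∀ v, lam * T v = ((d : ℂ) - 1) * S v := by
      intro v
      have c1 : ∑ f ∈ Finset.univ.filter (fun f => G.src f = v), S (G.src f)
          = (d : ℂ) * S v := by
        have : ∀ f ∈ Finset.univ.filter (fun f => G.src f = v), S (G.src f) = S v := by
          intro f hf; simp at hf; rw [hf]
        rw [Finset.sum_congr rfl this, Finset.sum_const, hreg v, nsmul_eq_mul]
      have c2 : ∑ f ∈ Finset.univ.filter (fun f => G.src f = v), φ (G.inv f) = S v :=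
        (sum_tgt_eq G φ v).symm
      calc lam * T v = ∑ f ∈ Finset.univ.filter (fun f => G.src f = v), lam * φ f := by
            rw [hTdef, Finset.mul_sum]
        _ = ∑ f ∈ Finset.univ.filter (fun f => G.src f = v), (S (G.src f) - φ (G.inv f)) :=
            Finset.sum_congr rfl fun f _ => (key f).symm
        _ = (d : ℂ) * S v - S v := by rw [Finset.sum_sub_distrib, c1, c2]
        _ = ((d : ℂ) - 1) * S v := by ring
    have key4 : ∀ v, lam * S v = (adjMatrix G).mulVec S v - T v := by
      intro v
      have c2 : ∑ f ∈ Finset.univ.filter (fun f => G.tgt f = v), φ (G.inv f) = T v := by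
        rw [sum_tgt_eq G (fun e => φ (G.inv e)) v]
        simp [G.inv_inv, hTdef]
      calc lam * S v = ∑ f ∈ Finset.univ.filter (fun f => G.tgt f = v), lam * φ f := by
            rw [hSdef, Finset.mul_sum]
        _ = ∑ f ∈ Finset.univ.filter (fun f => G.tgt f = v), (S (G.src f) - φ (G.inv f)) :=
            Finset.sum_congr rfl fun f _ => (key f).symm
        _ = (adjMatrix G).mulVec S v - T v := by
            rw [Finset.sum_sub_distrib, c2, adj_mulVec]
    have hSne : S ≠ 0 := by
      intro h0
      apply hφ0
      funext f
      have h := key2 f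
      rw [h0] at h
      simp at h
      rcases h with h | h
      · exact absurd (by linear_combination h) hlam2
      · exact h
    have hlamne : lam ≠ 0 := by
      intro h0
      apply hSne
      funext v
      have h := key3 v
      rw [h0, zero_mul] at h
      have := (mul_eq_zero.mp h.symm).resolve_left hd1
      simpa using this
    refine ⟨(lam ^ 2 + (d : ℂ) - 1) / lam, ⟨S, hSne, ?_⟩, ?_⟩
    · funext v
      have h3 := key3 v
      have h4 := key4 v
      simp only [Pi.smul_apply, smul_eq_mul]
      field_simp
      linear_combination (-lam) * h4 + h3
    · field_simp
      ring
  · rintro ⟨μ, ⟨ψ, hψ0, hψ⟩, hquad⟩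
    refine ⟨fun e => ψ (G.tgt e) - lam * ψ (G.src e), ?_, ?_⟩
    · intro h0
      obtain ⟨v, hv⟩ : ∃ v, ψ v ≠ 0 := Function.ne_iff.mp hψ0
      obtain ⟨e, he⟩ : (Finset.univ.filter fun e : E => G.src e = v).Nonempty := by
        rw [← Finset.card_pos, hreg v]; omega
      simp only [Finset.mem_filter, Finset.mem_univ, true_and] at he
      have h1 := congrFun h0 e
      have h2 := congrFun h0 (G.inv e)
      rw [G.tgt_inv, src_inv] at h2
      simp only [Pi.zero_apply, he] at h1 h2
      have hz : (lam ^ 2 - 1) * ψ v = 0 := by linear_combination (-1 : ℂ) * h2 - lam * h1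
      rcases mul_eq_zero.mp hz with h | h
      · exact hlam2 (by linear_combination h)
      · exact hv h
    · funext f
      rw [nb_mulVec, Pi.smul_apply, smul_eq_mul]
      have hA := congrFun hψ (G.src f)
      rw [adj_mulVec] at hA
      simp only [Pi.smul_apply, smul_eq_mul] at hA
      have c1 : ∑ e ∈ Finset.univ.filter (fun e => G.tgt e = G.src f), ψ (G.tgt e)
          = (d : ℂ) * ψ (G.src f) := by
        have : ∀ e ∈ Finset.univ.filter (fun e : E => G.tgt e = G.src f),
            ψ (G.tgt e) = ψ (G.src f) := by intro e he; simp at he; rw [he]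
        rw [Finset.sum_congr rfl this, Finset.sum_const, card_tgt G d hreg, nsmul_eq_mul]
      have hsum : ∑ e ∈ Finset.univ.filter (fun e => G.tgt e = G.src f),
          (ψ (G.tgt e) - lam * ψ (G.src e))
          = (d : ℂ) * ψ (G.src f) - lam * (μ * ψ (G.src f)) := by
        rw [Finset.sum_sub_distrib, c1, ← Finset.mul_sum, hA]
      rw [hsum, G.tgt_inv, src_inv]
      linear_combination (ψ (G.src f)) * hquad
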